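/- arXiv:2512.13034 — 4 statements merged into one kernel-verified Lean document; each statement's English description precedes it below -/
import Mathlib

section
/- Let A ∈ ℝ^{m×n}, let q ∈ ℝ^n be a nonzero vector, let p ∈ ℝ^m, and let β ∈ [0,1]. Define p⁺ = β p + (1−β) (A q)/‖q‖². Then ‖A − p⁺ qᵀ‖_F ≤ ‖A − p qᵀ‖_F. (This is the even-iteration case of Proposition 1: the alternating update of the left factor does not increase the rank-one factorization error.) -/
open Matrix Finset

/-- Frobenius norm of a real matrix: square root of the sum of squares of all entries. -/
noncomputable def frobNorm {m n : ℕ} (A : Matrix (Fin m) (Fin n) ℝ) : ℝ :=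
  Real.sqrt (∑ i, ∑ j, (A i j) ^ 2)

/-- Squared Euclidean 2-norm of a vector: `sqNorm v = ‖v‖²`. -/
def sqNorm {k : ℕ} (v : Fin k → ℝ) : ℝ := ∑ i, (v i) ^ 2

lemma row_ineq (s b c β : ℝ) (hs : 0 < s) (hβ0 : 0 ≤ β) (hβ1 : β ≤ 1) :
    -2*(β*c+(1-β)*(b/s))*b + (β*c+(1-β)*(b/s))^2*s ≤ -2*c*b + c^2*s := by
  have hd : β*c+(1-β)*(b/s) - b/s = β*(c - b/s) := by ring
  have h1 : -2*(β*c+(1-β)*(b/s))*b + (β*c+(1-β)*(b/s))^2*s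
      = s*((β*c+(1-β)*(b/s)) - b/s)^2 - b^2/s := by field_simp; ring
  have h2 : -2*c*b + c^2*s = s*(c - b/s)^2 - b^2/s := by field_simp; ring
  rw [h1, h2, hd]
  have hb2 : β^2 ≤ 1 := by nlinarith
  have : (β*(c - b/s))^2 ≤ (c - b/s)^2 := by
    calc (β*(c - b/s))^2 = β^2*(c - b/s)^2 := by ring
      _ ≤ 1*(c - b/s)^2 := mul_le_mul_of_nonneg_right hb2 (sq_nonneg _)
      _ = (c - b/s)^2 := one_mul _
  nlinarith

/-- Even-iteration case of Proposition 1: updating the left factor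
`p⁺ = β p + (1−β) (A q)/‖q‖²` does not increase the rank-one factorization error. -/
theorem alada_even_update_decreases_error {m n : ℕ}
    (A : Matrix (Fin m) (Fin n) ℝ) (q : Fin n → ℝ) (hq : q ≠ 0)
    (p : Fin m → ℝ) (β : ℝ) (hβ0 : 0 ≤ β) (hβ1 : β ≤ 1) :
    frobNorm (A - Matrix.vecMulVec (β • p + (1 - β) • ((sqNorm q)⁻¹ • A.mulVec q)) q)
      ≤ frobNorm (A - Matrix.vecMulVec p q) := by
  have hs : 0 < sqNorm q := by
    obtain ⟨i, hi⟩ := Function.ne_iff.mp hq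
    exact Finset.sum_pos' (fun j _ => sq_nonneg _)
      ⟨i, Finset.mem_univ i, pow_pos (abs_pos.mpr hi) 2 |>.trans_eq (by rw [sq_abs])⟩
  unfold frobNorm
  apply Real.sqrt_le_sqrt
  apply Finset.sum_le_sum
  intro i _
  have expand : ∀ c : ℝ, ∑ j, (A i j - c * q j)^2
      = (∑ j, (A i j)^2) + (-2*c*(∑ j, A i j * q j) + c^2 * sqNorm q) := by
    intro c
    unfold sqNorm
    rw [Finset.mul_sum, Finset.mul_sum, ← Finset.sum_add_distrib, ← Finset.sum_add_distrib]
    exact Finset.sum_congr rfl fun j _ => by ring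
  have hmv : A.mulVec q i = ∑ j, A i j * q j := by
    simp [Matrix.mulVec, dotProduct]
  simp only [Matrix.sub_apply, Matrix.vecMulVec_apply, Pi.add_apply, Pi.smul_apply,
    smul_eq_mul, hmv]
  have e1 := expand (β * p i + (1-β) * ((sqNorm q)⁻¹ * ∑ j, A i j * q j))
  have e2 := expand (p i)
  rw [e1, e2]
  have := row_ineq (sqNorm q) (∑ j, A i j * q j) (p i) β hs hβ0 hβ1
  rw [div_eq_inv_mul] at this
  linarith
end

section
/- Let A ∈ ℝ^{m×n}, let p ∈ ℝ^m be a nonzero vector, let q ∈ ℝ^n, and let β ∈ [0,1]. Define q⁺ = β q + (1−β) (Aᵀ p)/‖p‖². Then ‖A − p (q⁺)ᵀ‖_F ≤ ‖A − p qᵀ‖_F. (This is the odd-iteration case of Proposition 1: the alternating update of the right factor does not increase the rank-one factorization error.) -/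
open Matrix Finset

/-- Odd-iteration case of Proposition 1: updating the right factor
`q⁺ = β q + (1−β) (Aᵀ p)/‖p‖²` does not increase the rank-one factorization error. -/
theorem alada_odd_update_decreases_error {m n : ℕ}
    (A : Matrix (Fin m) (Fin n) ℝ) (p : Fin m → ℝ) (hp : p ≠ 0)
    (q : Fin n → ℝ) (β : ℝ) (hβ0 : 0 ≤ β) (hβ1 : β ≤ 1) :
    frobNorm (A - Matrix.vecMulVec p (β • q + (1 - β) • ((sqNorm p)⁻¹ • Aᵀ.mulVec p)))
      ≤ frobNorm (A - Matrix.vecMulVec p q) := by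
  have hP : 0 < sqNorm p := by
    obtain ⟨i, hi⟩ : ∃ i, p i ≠ 0 := by
      by_contra h; push_neg at h; exact hp (funext h)
    have h1 : 0 < (p i) ^ 2 := by positivity
    unfold sqNorm
    exact lt_of_lt_of_le h1 (Finset.single_le_sum (fun j _ => sq_nonneg (p j)) (mem_univ i))
  have key : ∀ v : Fin n → ℝ, (∑ i, ∑ j, ((A - Matrix.vecMulVec p v) i j) ^ 2)
      = ∑ j, ∑ i, (A i j - p i * v j) ^ 2 := by
    intro v
    rw [Finset.sum_comm]
    simp [Matrix.vecMulVec, Matrix.sub_apply]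
  unfold frobNorm
  rw [key, key]
  apply Real.sqrt_le_sqrt
  apply Finset.sum_le_sum
  intro j _
  set P := sqNorm p with hPdef
  set T := (Aᵀ.mulVec p) j with hTdef
  have hT : ∑ i, A i j * p i = T := by
    simp [hTdef, Matrix.mulVec, dotProduct, Matrix.transpose_apply]
  have expand : ∀ x : ℝ, ∑ i, (A i j - p i * x) ^ 2
      = ∑ i, (A i j) ^ 2 - 2 * x * T + x ^ 2 * P := by
    intro x
    calc ∑ i, (A i j - p i * x) ^ 2
        = ∑ i, ((A i j) ^ 2 - 2 * x * (A i j * p i) + x ^ 2 * (p i) ^ 2) := by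
          apply Finset.sum_congr rfl; intros; ring
      _ = ∑ i, (A i j) ^ 2 - 2 * x * T + x ^ 2 * P := by
          rw [Finset.sum_add_distrib, Finset.sum_sub_distrib, ← Finset.mul_sum,
            ← Finset.mul_sum, hT, hPdef, sqNorm]
  have hval : (β • q + (1 - β) • (P⁻¹ • Aᵀ.mulVec p)) j
      = β * q j + (1 - β) * (P⁻¹ * T) := by
    simp [hTdef]
  rw [hval, expand, expand]
  have hPne : P ≠ 0 := ne_of_gt hP
  set s := P⁻¹ * T with hsdef
  have hPs : P * s = T := by rw [hsdef, ← mul_assoc, mul_inv_cancel₀ hPne, one_mul]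
  have hid : (β * q j + (1 - β) * s) ^ 2 * P - 2 * (β * q j + (1 - β) * s) * T
      - (q j ^ 2 * P - 2 * q j * T) = (β ^ 2 - 1) * P * (q j - s) ^ 2 := by
    rw [← hPs]; ring
  have hβ2 : 0 ≤ 1 - β ^ 2 := by nlinarith
  have hnn : (β ^ 2 - 1) * P * (q j - s) ^ 2 ≤ 0 := by
    nlinarith [mul_nonneg (mul_nonneg hβ2 hP.le) (sq_nonneg (q j - s))]
  linarith
end

section
/- Let A ∈ ℝ^{m×n}, let q ∈ ℝ^n be nonzero, let p ∈ ℝ^m, let β ∈ [0,1], and set p* = (A q)/‖q‖² and p⁺ = β p + (1−β) p*. Then the following exact identity holds: ‖A − p⁺ qᵀ‖_F² = ‖A − p* qᵀ‖_F² + β² ‖q‖² ‖p − p*‖². In particular, if p ≠ p* and β < 1, the factorization error strictly decreases: ‖A − p⁺ qᵀ‖_F < ‖A − p qᵀ‖_F. -/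
open Matrix Finset

lemma sqNorm_nonneg {k : ℕ} (v : Fin k → ℝ) : 0 ≤ sqNorm v :=
  Finset.sum_nonneg fun _ _ => sq_nonneg _

lemma sqNorm_pos {k : ℕ} {v : Fin k → ℝ} (hv : v ≠ 0) : 0 < sqNorm v := by
  obtain ⟨i, hi⟩ : ∃ i, v i ≠ 0 := by
    by_contra h; push_neg at h; exact hv (funext h)
  exact lt_of_lt_of_le (by positivity)
    (Finset.single_le_sum (fun j _ => sq_nonneg (v j)) (mem_univ i))

lemma frobNorm_sq {m n : ℕ} (A : Matrix (Fin m) (Fin n) ℝ) :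
    frobNorm A ^ 2 = ∑ i, ∑ j, (A i j) ^ 2 := by
  rw [frobNorm, Real.sq_sqrt]
  exact Finset.sum_nonneg fun i _ => Finset.sum_nonneg fun j _ => sq_nonneg _

lemma frobNorm_nonneg {m n : ℕ} (A : Matrix (Fin m) (Fin n) ℝ) : 0 ≤ frobNorm A :=
  Real.sqrt_nonneg _

lemma key {m n : ℕ} (A : Matrix (Fin m) (Fin n) ℝ) (q : Fin n → ℝ)
    (hq : sqNorm q ≠ 0) (pstar : Fin m → ℝ)
    (hps : pstar = (sqNorm q)⁻¹ • A.mulVec q) (v : Fin m → ℝ) :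
    frobNorm (A - Matrix.vecMulVec v q) ^ 2
      = frobNorm (A - Matrix.vecMulVec pstar q) ^ 2
        + sqNorm q * sqNorm (v - pstar) := by
  rw [frobNorm_sq, frobNorm_sq,
    show sqNorm q * sqNorm (v - pstar) = ∑ i, sqNorm q * (v i - pstar i) ^ 2 from by
      simp only [sqNorm, Pi.sub_apply, Finset.mul_sum],
    ← Finset.sum_add_distrib]
  refine Finset.sum_congr rfl fun i _ => ?_
  have hps' : pstar i * sqNorm q = ∑ j, A i j * q j := by
    rw [hps]
    simp only [Pi.smul_apply, smul_eq_mul]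
    rw [mul_comm, ← mul_assoc, mul_inv_cancel₀ hq, one_mul, Matrix.mulVec]
    rfl
  have expand : ∀ j, ((A - Matrix.vecMulVec v q) i j) ^ 2
      = ((A - Matrix.vecMulVec pstar q) i j) ^ 2
        + (v i - pstar i) ^ 2 * q j ^ 2
        - 2 * (v i - pstar i) * ((A i j - pstar i * q j) * q j) := by
    intro j
    simp only [Matrix.sub_apply, Matrix.vecMulVec_apply]
    ring
  simp only [expand]
  rw [Finset.sum_sub_distrib, Finset.sum_add_distrib, ← Finset.mul_sum,
    ← Finset.mul_sum]
  have hcross : ∑ j, (A i j - pstar i * q j) * q j = 0 := by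
    have : ∑ j, (A i j - pstar i * q j) * q j
        = (∑ j, A i j * q j) - pstar i * sqNorm q := by
      rw [sqNorm, Finset.mul_sum, ← Finset.sum_sub_distrib]
      exact Finset.sum_congr rfl fun j _ => by ring
    rw [this, hps', sub_self]
  rw [hcross, mul_zero, sub_zero, sqNorm]
  ring

/-- Exact error identity for the Alada left-factor update: with `p* = (A q)/‖q‖²` and
`p⁺ = β p + (1−β) p*`, one has
`‖A − p⁺ qᵀ‖_F² = ‖A − p* qᵀ‖_F² + β² ‖q‖² ‖p − p*‖²`; in particular, if `p ≠ p*`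
and `β < 1`, the factorization error strictly decreases. -/
theorem alada_left_update_exact_identity {m n : ℕ}
    (A : Matrix (Fin m) (Fin n) ℝ) (q : Fin n → ℝ) (hq : q ≠ 0)
    (p : Fin m → ℝ) (β : ℝ) (hβ0 : 0 ≤ β) (hβ1 : β ≤ 1) :
    ∀ pstar : Fin m → ℝ, pstar = (sqNorm q)⁻¹ • A.mulVec q →
    ∀ pplus : Fin m → ℝ, pplus = β • p + (1 - β) • pstar →
      frobNorm (A - Matrix.vecMulVec pplus q) ^ 2
        = frobNorm (A - Matrix.vecMulVec pstar q) ^ 2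
          + β ^ 2 * sqNorm q * sqNorm (p - pstar) ∧
      (p ≠ pstar → β < 1 →
        frobNorm (A - Matrix.vecMulVec pplus q)
          < frobNorm (A - Matrix.vecMulVec p q)) := by
  intro pstar hps pplus hpp
  have hq2 : 0 < sqNorm q := sqNorm_pos hq
  have hdiff : pplus - pstar = β • (p - pstar) := by
    funext i
    simp only [hpp, Pi.sub_apply, Pi.add_apply, Pi.smul_apply, smul_eq_mul]
    ring
  have hsqsm : sqNorm (pplus - pstar) = β ^ 2 * sqNorm (p - pstar) := by
    rw [hdiff, sqNorm, sqNorm, Finset.mul_sum]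
    exact Finset.sum_congr rfl fun i _ => by
      simp only [Pi.smul_apply, smul_eq_mul]; ring
  have hid : frobNorm (A - Matrix.vecMulVec pplus q) ^ 2
      = frobNorm (A - Matrix.vecMulVec pstar q) ^ 2
        + β ^ 2 * sqNorm q * sqNorm (p - pstar) := by
    rw [key A q hq2.ne' pstar hps pplus, hsqsm]; ring
  refine ⟨hid, fun hne hβ => ?_⟩
  have hd : 0 < sqNorm (p - pstar) := sqNorm_pos (sub_ne_zero_of_ne hne)
  have hβ2 : β ^ 2 < 1 := by nlinarith
  have hp : frobNorm (A - Matrix.vecMulVec p q) ^ 2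
      = frobNorm (A - Matrix.vecMulVec pstar q) ^ 2
        + sqNorm q * sqNorm (p - pstar) :=
    key A q hq2.ne' pstar hps p
  have hlt : frobNorm (A - Matrix.vecMulVec pplus q) ^ 2
      < frobNorm (A - Matrix.vecMulVec p q) ^ 2 := by
    rw [hid, hp]; nlinarith [mul_pos hq2 hd]
  exact lt_of_pow_lt_pow_left₀ 2 (frobNorm_nonneg _) hlt
end

section
/- (Proposition 1, combined form.) Let β₂ ∈ [0,1) and let (A_t)_{t≥0} be matrices in ℝ^{m×n}. Let (p_t) in ℝ^m and (q_t) in ℝ^n be sequences with p_t, q_t nonzero for all t that follow the alternating adaptation rule: for even t, p_{t+1} = β₂ p_t + (1−β₂)(A_t q_t)/‖q_t‖² and q_{t+1} = q_t; for odd t, p_{t+1} = p_t and q_{t+1} = β₂ q_t + (1−β₂)(A_tᵀ p_t)/‖p_t‖². Then the reconstructed momenta U_t = p_t q_tᵀ satisfy, for every t ≥ 0, ‖A_t − U_{t+1}‖_F ≤ ‖A_t − U_t‖_F. -/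
open Matrix Finset

lemma scalar_step (s u x β : ℝ) (hs : 0 ≤ s) (hβ0 : 0 ≤ β) (hβ1 : β ≤ 1) :
    s*(β*x+(1-β)*u)^2 - 2*(s*u)*(β*x+(1-β)*u) ≤ s*x^2 - 2*(s*u)*x := by
  nlinarith [mul_nonneg (mul_nonneg hs (sub_nonneg.2 hβ1))
    (mul_nonneg (by linarith : (0:ℝ) ≤ 1+β) (sq_nonneg (u-x)))]

lemma row_expand {n : ℕ} (a : Fin n → ℝ) (q : Fin n → ℝ) (x : ℝ) :
    ∑ j, (a j - x * q j)^2
      = (∑ j, (a j)^2) - 2 * (∑ j, a j * q j) * x + sqNorm q * x^2 := by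
  have h : ∀ j ∈ Finset.univ, (a j - x * q j)^2
      = (a j)^2 - 2 * (a j * q j) * x + (q j)^2 * x^2 := fun j _ => by ring
  rw [Finset.sum_congr rfl h]
  simp [Finset.sum_add_distrib, Finset.sum_sub_distrib, sqNorm,
    ← Finset.sum_mul, ← Finset.mul_sum]

lemma main_step {m n : ℕ} (A : Matrix (Fin m) (Fin n) ℝ)
    (p p' : Fin m → ℝ) (q : Fin n → ℝ) (hq : q ≠ 0)
    (β : ℝ) (hβ0 : 0 ≤ β) (hβ1 : β ≤ 1)
    (hp' : p' = β • p + (1-β) • ((sqNorm q)⁻¹ • A.mulVec q)) :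
    frobNorm (A - Matrix.vecMulVec p' q) ≤ frobNorm (A - Matrix.vecMulVec p q) := by
  unfold frobNorm
  apply Real.sqrt_le_sqrt
  apply Finset.sum_le_sum
  intro i _
  have hs := sqNorm_pos hq
  set s := sqNorm q with hsdef
  set b := ∑ j, A i j * q j with hb
  have hAq : A.mulVec q i = b := by
    simp [Matrix.mulVec, dotProduct, hb]
  have hp'i : p' i = β * p i + (1-β) * (s⁻¹ * b) := by
    simp [hp', hAq]
  have h1 : ∑ j, ((A - Matrix.vecMulVec p' q) i j)^2
      = (∑ j, (A i j)^2) - 2 * b * p' i + s * (p' i)^2 := by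
    simpa [Matrix.vecMulVec, hb] using row_expand (fun j => A i j) q (p' i)
  have h2 : ∑ j, ((A - Matrix.vecMulVec p q) i j)^2
      = (∑ j, (A i j)^2) - 2 * b * p i + s * (p i)^2 := by
    simpa [Matrix.vecMulVec, hb] using row_expand (fun j => A i j) q (p i)
  rw [h1, h2, hp'i]
  have hbu : b = s * (s⁻¹ * b) := by
    field_simp
  have h3 := scalar_step s (s⁻¹ * b) (p i) β hs.le hβ0 hβ1
  rw [← hbu] at h3
  linarith

lemma frob_transpose {m n : ℕ} (A : Matrix (Fin m) (Fin n) ℝ) :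
    frobNorm Aᵀ = frobNorm A := by
  unfold frobNorm
  rw [Finset.sum_comm]
  rfl

/-- Proposition 1 (combined form): under the alternating adaptation rule, the
reconstructed momenta `U_t = p_t q_tᵀ` satisfy
`‖A_t − U_{t+1}‖_F ≤ ‖A_t − U_t‖_F` for every `t`. -/
theorem alada_alternating_error_monotone {m n : ℕ}
    (β₂ : ℝ) (hβ₂0 : 0 ≤ β₂) (hβ₂1 : β₂ < 1)
    (A : ℕ → Matrix (Fin m) (Fin n) ℝ)
    (p : ℕ → Fin m → ℝ) (q : ℕ → Fin n → ℝ)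
    (hp : ∀ t, p t ≠ 0) (hq : ∀ t, q t ≠ 0)
    (heven : ∀ t, Even t →
      p (t + 1) = β₂ • p t + (1 - β₂) • ((sqNorm (q t))⁻¹ • (A t).mulVec (q t)) ∧
      q (t + 1) = q t)
    (hodd : ∀ t, Odd t →
      p (t + 1) = p t ∧
      q (t + 1) = β₂ • q t + (1 - β₂) • ((sqNorm (p t))⁻¹ • (A t)ᵀ.mulVec (p t))) :
    ∀ t, frobNorm (A t - Matrix.vecMulVec (p (t + 1)) (q (t + 1)))
      ≤ frobNorm (A t - Matrix.vecMulVec (p t) (q t)) := by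
  intro t
  rcases Nat.even_or_odd t with he | ho
  · obtain ⟨h1, h2⟩ := heven t he
    rw [h2]
    exact main_step (A t) (p t) (p (t+1)) (q t) (hq t) β₂ hβ₂0 hβ₂1.le h1
  · obtain ⟨h1, h2⟩ := hodd t ho
    rw [h1]
    have key := main_step (A t)ᵀ (q t) (q (t+1)) (p t) (hp t) β₂ hβ₂0 hβ₂1.le h2
    have e1 : (A t)ᵀ - Matrix.vecMulVec (q (t+1)) (p t)
        = (A t - Matrix.vecMulVec (p t) (q (t+1)))ᵀ := by
      ext i j
      simp [Matrix.vecMulVec_apply, mul_comm]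
    have e2 : (A t)ᵀ - Matrix.vecMulVec (q t) (p t)
        = (A t - Matrix.vecMulVec (p t) (q t))ᵀ := by
      ext i j
      simp [Matrix.vecMulVec_apply, mul_comm]
    rwa [e1, e2, frob_transpose, frob_transpose] at key
end
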